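/- Let C be a finite nonempty set of class labels, let {M_c}_{c∈C} be a POVM on ℂ^N (each M_c positive semidefinite with Σ_{c∈C} M_c = I), let {E_k}_{k∈K} be a finite Kraus family on ℂ^N (Σ_{k∈K} E_kᴴ E_k = I) with associated channel E(σ) = Σ_k E_k σ E_kᴴ, and let ρ be a density matrix on ℂ^N. Set p_c := Tr[M_c E(ρ)] and let c* ∈ C satisfy p_{c*} ≥ p_c for all c ∈ C. Then for every density matrix σ on ℂ^N with 1 − F(ρ, σ) ≤ min_{c ≠ c*} (1/2)(√(p_{c*}) − √(p_c))², it holds that Tr[M_{c*} E(σ)] ≥ Tr[M_c E(σ)] for every c ≠ c* (assuming |C| ≥ 2; if |C| = 1 the conclusion is vacuous). -/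

import Mathlib

open Matrix
open scoped ComplexOrder

/-- Positive-semidefinite square root of a matrix (zero if not PSD). -/
noncomputable def psdSqrt {N : ℕ} (A : Matrix (Fin N) (Fin N) ℂ) :
    Matrix (Fin N) (Fin N) ℂ :=
  open scoped Classical in
  if h : A.PosSemidef then
    h.1.eigenvectorUnitary.1 * diagonal ((↑) ∘ (√·) ∘ h.1.eigenvalues) *
      (star h.1.eigenvectorUnitary : Matrix (Fin N) (Fin N) ℂ)
  else 0

/-- Root fidelity `Tr √(√ρ σ √ρ)`. -/
noncomputable def rootFidelity {N : ℕ} (ρ σ : Matrix (Fin N) (Fin N) ℂ) : ℝ :=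
  (psdSqrt (psdSqrt ρ * σ * psdSqrt ρ)).trace.re

/-- Fidelity `F(ρ,σ) = (Tr √(√ρ σ √ρ))²`. -/
noncomputable def fidelity {N : ℕ} (ρ σ : Matrix (Fin N) (Fin N) ℂ) : ℝ :=
  (rootFidelity ρ σ) ^ 2

/-- A density matrix: positive semidefinite with trace one. -/
def IsDensityMatrix {N : ℕ} (ρ : Matrix (Fin N) (Fin N) ℂ) : Prop :=
  ρ.PosSemidef ∧ ρ.trace = 1

/-- A POVM: a family of PSD matrices summing to the identity. -/
def IsPOVM {N : ℕ} {C : Type*} [Fintype C] (M : C → Matrix (Fin N) (Fin N) ℂ) : Prop :=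
  (∀ c, (M c).PosSemidef) ∧ ∑ c, M c = 1

/-- A Kraus family: `∑ Eₖᴴ Eₖ = I`. -/
def IsKrausFamily {N : ℕ} {K : Type*} [Fintype K] (E : K → Matrix (Fin N) (Fin N) ℂ) : Prop :=
  ∑ k, (E k)ᴴ * E k = 1

/-- The quantum channel associated with a Kraus family. -/
noncomputable def channel {N : ℕ} {K : Type*} [Fintype K]
    (E : K → Matrix (Fin N) (Fin N) ℂ) (σ : Matrix (Fin N) (Fin N) ℂ) :
    Matrix (Fin N) (Fin N) ℂ :=
  ∑ k, E k * σ * (E k)ᴴ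

/-- Minimum of `f` over all labels distinct from `cstar` (needs `|C| ≥ 2`). -/
noncomputable def minErase {C : Type*} [Fintype C] [DecidableEq C] {α : Type*} [LinearOrder α]
    (cstar : C) (h : 1 < Fintype.card C) (f : C → α) : α :=
  (Finset.univ.erase cstar).inf'
    ((Finset.erase_nonempty (Finset.mem_univ cstar)).mpr
      (Finset.one_lt_card_iff_nontrivial.mp (by simpa [Finset.card_univ] using h))) f

section helpers

variable {n : ℕ}

/-- explicit square root of a PSD matrix -/
noncomputable def Matrix.PosSemidef.sqrt {A : Matrix (Fin n) (Fin n) ℂ} (hA : A.PosSemidef) :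
    Matrix (Fin n) (Fin n) ℂ :=
  hA.1.eigenvectorUnitary.1 * diagonal ((↑) ∘ (√·) ∘ hA.1.eigenvalues) *
    (star hA.1.eigenvectorUnitary : Matrix (Fin n) (Fin n) ℂ)

lemma Matrix.PosSemidef.posSemidef_sqrt {A : Matrix (Fin n) (Fin n) ℂ} (hA : A.PosSemidef) :
    hA.sqrt.PosSemidef := by
  unfold Matrix.PosSemidef.sqrt
  have h := (posSemidef_diagonal_iff (d := ((↑) ∘ (√·) ∘ hA.1.eigenvalues : Fin n → ℂ))).mpr
    (fun i => by simp [Function.comp_apply, Real.sqrt_nonneg])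
  have := h.mul_mul_conjTranspose_same (hA.1.eigenvectorUnitary.1)
  simpa [star_eq_conjTranspose] using this

lemma Matrix.PosSemidef.sqrt_mul_self {A : Matrix (Fin n) (Fin n) ℂ} (hA : A.PosSemidef) :
    hA.sqrt * hA.sqrt = A := by
  unfold Matrix.PosSemidef.sqrt
  have hU : (star hA.1.eigenvectorUnitary : Matrix (Fin n) (Fin n) ℂ) *
      hA.1.eigenvectorUnitary.1 = 1 := Unitary.coe_star_mul_self _
  have hD : diagonal ((↑) ∘ (√·) ∘ hA.1.eigenvalues : Fin n → ℂ) *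
      diagonal ((↑) ∘ (√·) ∘ hA.1.eigenvalues) = diagonal (RCLike.ofReal ∘ hA.1.eigenvalues) := by
    rw [diagonal_mul_diagonal]
    congr 1
    funext i
    simp only [Function.comp_apply]
    rw [← Complex.ofReal_mul, Real.mul_self_sqrt (hA.eigenvalues_nonneg i)]
    rfl
  conv_rhs => rw [hA.1.spectral_theorem, Unitary.conjStarAlgAut_apply]
  calc _ = hA.1.eigenvectorUnitary.1 * diagonal ((↑) ∘ (√·) ∘ hA.1.eigenvalues : Fin n → ℂ) *
      ((star hA.1.eigenvectorUnitary : Matrix (Fin n) (Fin n) ℂ) * hA.1.eigenvectorUnitary.1) *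
      diagonal ((↑) ∘ (√·) ∘ hA.1.eigenvalues) *
      (star hA.1.eigenvectorUnitary : Matrix (Fin n) (Fin n) ℂ) := by simp only [mul_assoc]
    _ = _ := by rw [hU, mul_one, mul_assoc _ (diagonal _) (diagonal _), hD]

/-- identity embedding into EuclideanSpace -/
noncomputable def toE {n : ℕ} (x : Fin n → ℂ) : EuclideanSpace ℂ (Fin n) := (WithLp.equiv 2 _).symm x

lemma inner_toE (x y : Fin n → ℂ) : (inner ℂ (toE x) (toE y) : ℂ) = star x ⬝ᵥ y :=
  (EuclideanSpace.inner_toLp_toLp x y).trans (dotProduct_comm _ _)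

lemma norm_toE_sq (x : Fin n → ℂ) : ‖toE x‖ ^ 2 = (star x ⬝ᵥ x).re := by
  rw [← inner_self_eq_norm_sq (𝕜 := ℂ), inner_toE]
  rfl

lemma toE_apply (x : Fin n → ℂ) (i : Fin n) : toE x i = x i := rfl

lemma my_sum_mulVec {ι : Type*} (s : Finset ι) (A : ι → Matrix (Fin n) (Fin n) ℂ)
    (x : Fin n → ℂ) : (∑ i ∈ s, A i) *ᵥ x = ∑ i ∈ s, A i *ᵥ x := by
  induction s using Finset.cons_induction with
  | empty => simp
  | cons a s ha ih => simp [Finset.sum_cons, add_mulVec, ih]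

lemma dot_shift (A B : Matrix (Fin n) (Fin n) ℂ) (x y : Fin n → ℂ) :
    star x ⬝ᵥ ((Aᴴ * B) *ᵥ y) = star (A *ᵥ x) ⬝ᵥ (B *ᵥ y) := by
  rw [star_mulVec, ← mulVec_mulVec, dotProduct_mulVec]

lemma psdSqrt_eq {A : Matrix (Fin n) (Fin n) ℂ} (hA : A.PosSemidef) :
    psdSqrt A = hA.sqrt := dif_pos hA

lemma psdSqrt_posSemidef {A : Matrix (Fin n) (Fin n) ℂ} (hA : A.PosSemidef) :
    (psdSqrt A).PosSemidef := by rw [psdSqrt_eq hA]; exact hA.posSemidef_sqrt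

lemma psdSqrt_mul_self {A : Matrix (Fin n) (Fin n) ℂ} (hA : A.PosSemidef) :
    psdSqrt A * psdSqrt A = A := by rw [psdSqrt_eq hA]; exact hA.sqrt_mul_self

lemma trace_mul_conjTranspose_re (C : Matrix (Fin n) (Fin n) ℂ) :
    (C * Cᴴ).trace.re = ∑ r, ∑ t, ‖C r t‖ ^ 2 := by
  simp only [Matrix.trace, Matrix.diag, Matrix.mul_apply, conjTranspose_apply]
  rw [Complex.re_sum]
  refine Finset.sum_congr rfl fun r _ => ?_
  rw [Complex.re_sum]
  refine Finset.sum_congr rfl fun t _ => ?_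
  rw [show star (C r t) = (starRingEnd ℂ) (C r t) from rfl, Complex.mul_conj]
  norm_cast
  simp [Complex.normSq_eq_norm_sq]

lemma trace_psd_nonneg {A : Matrix (Fin n) (Fin n) ℂ} (hA : A.PosSemidef) : 0 ≤ A.trace := by
  obtain ⟨B, rfl⟩ : ∃ B : Matrix (Fin n) (Fin n) ℂ, A = Bᴴ * B :=
    ⟨psdSqrt A, by rw [(psdSqrt_posSemidef hA).1.eq, psdSqrt_mul_self hA]⟩
  unfold Matrix.trace
  refine Finset.sum_nonneg fun t _ => ?_
  rw [Matrix.diag_apply, Matrix.mul_apply]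
  exact Finset.sum_nonneg fun r _ => by
    rw [conjTranspose_apply]
    exact star_mul_self_nonneg _

lemma trace_psd_mul_nonneg {A B : Matrix (Fin n) (Fin n) ℂ}
    (hA : A.PosSemidef) (hB : B.PosSemidef) : 0 ≤ (A * B).trace := by
  have h1 : A * B = A * (psdSqrt B * psdSqrt B) := by rw [psdSqrt_mul_self hB]
  have hQ := psdSqrt_posSemidef hB
  rw [h1, ← mul_assoc, trace_mul_comm]
  have : (psdSqrt B * (A * psdSqrt B)).PosSemidef := by
    have := hA.mul_mul_conjTranspose_same (psdSqrt B)ᴴ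
    simpa [conjTranspose_conjTranspose, hQ.1.eq, mul_assoc] using this
  exact trace_psd_nonneg this

lemma trace_psd_mul_eq_re {A B : Matrix (Fin n) (Fin n) ℂ}
    (hA : A.PosSemidef) (hB : B.PosSemidef) :
    ((A * B).trace.re : ℂ) = (A * B).trace := by
  have h := trace_psd_mul_nonneg hA hB
  rw [Complex.le_def] at h
  exact Complex.ext rfl (by simpa using h.2)

lemma trace_psd_mul_re_nonneg {A B : Matrix (Fin n) (Fin n) ℂ}
    (hA : A.PosSemidef) (hB : B.PosSemidef) : 0 ≤ (A * B).trace.re :=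
  ((Complex.le_def).mp (trace_psd_mul_nonneg hA hB)).1

end helpers

section bessel
variable {n : ℕ}

lemma bessel_sum (C : Matrix (Fin n) (Fin n) ℂ) (s : Finset (Fin n))
    (f : Fin n → (Fin n → ℂ))
    (hf : Orthonormal ℂ (fun j : s => toE (f j)))
    (hzero : ∀ j ∉ s, f j = 0) :
    ∑ j, ‖toE (C *ᵥ f j)‖ ^ 2 ≤ (C * Cᴴ).trace.re := by
  have expand : ∀ x : Fin n → ℂ,
      ‖toE (C *ᵥ x)‖ ^ 2 = ∑ r, ‖(inner ℂ (toE (star (C r))) (toE x) : ℂ)‖ ^ 2 := by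
    intro x
    rw [EuclideanSpace.norm_eq, Real.sq_sqrt (by positivity)]
    refine Finset.sum_congr rfl fun r _ => ?_
    congr 1
    rw [inner_toE, star_star]
    rfl
  have hsub : ∑ j, ‖toE (C *ᵥ f j)‖ ^ 2 = ∑ j ∈ s, ‖toE (C *ᵥ f j)‖ ^ 2 := by
    refine (Finset.sum_subset s.subset_univ fun j _ hj => ?_).symm
    rw [hzero j hj]
    simp [toE]
  rw [hsub]
  calc ∑ j ∈ s, ‖toE (C *ᵥ f j)‖ ^ 2
      = ∑ j ∈ s, ∑ r, ‖(inner ℂ (toE (star (C r))) (toE (f j)) : ℂ)‖ ^ 2 :=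
        Finset.sum_congr rfl fun j _ => expand (f j)
    _ = ∑ r, ∑ j ∈ s, ‖(inner ℂ (toE (f j)) (toE (star (C r))) : ℂ)‖ ^ 2 := by
        rw [Finset.sum_comm]
        exact Finset.sum_congr rfl fun r _ => Finset.sum_congr rfl fun j _ => by
          rw [norm_inner_symm]
    _ ≤ ∑ r, ‖toE (star (C r))‖ ^ 2 := by
        refine Finset.sum_le_sum fun r _ => ?_
        have h := hf.sum_inner_products_le (s := Finset.univ) (toE (star (C r)))
        rw [← Finset.sum_coe_sort s (fun j => ‖(inner ℂ (toE (f j)) (toE (star (C r))) : ℂ)‖ ^ 2)]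
        exact h
    _ = (C * Cᴴ).trace.re := by
        rw [trace_mul_conjTranspose_re]
        refine Finset.sum_congr rfl fun r _ => ?_
        rw [EuclideanSpace.norm_eq, Real.sq_sqrt (by positivity)]
        exact Finset.sum_congr rfl fun t _ => by
          rw [toE_apply]
          simp

end bessel

section main
variable {n : ℕ}

lemma my_dotProduct_sum {ι : Type*} (s : Finset ι) (x : Fin n → ℂ) (y : ι → Fin n → ℂ) :
    x ⬝ᵥ (∑ i ∈ s, y i) = ∑ i ∈ s, x ⬝ᵥ y i := by
  unfold dotProduct
  rw [Finset.sum_comm]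
  refine Finset.sum_congr rfl fun t _ => ?_
  rw [Finset.sum_apply, Finset.mul_sum]

lemma conj_mul_trace_eq (W τ : Matrix (Fin n) (Fin n) ℂ)
    (hW : W.PosSemidef) (hτ : τ.PosSemidef) :
    ((psdSqrt W * psdSqrt τ) * (psdSqrt W * psdSqrt τ)ᴴ).trace = (W * τ).trace := by
  have hQ := (psdSqrt_posSemidef hW).1
  have hR := (psdSqrt_posSemidef hτ).1
  rw [conjTranspose_mul, hQ.eq, hR.eq]
  calc (psdSqrt W * psdSqrt τ * (psdSqrt τ * psdSqrt W)).trace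
      = (psdSqrt W * (psdSqrt τ * psdSqrt τ) * psdSqrt W).trace := by
        simp only [mul_assoc]
    _ = (psdSqrt W * τ * psdSqrt W).trace := by rw [psdSqrt_mul_self hτ]
    _ = (psdSqrt W * psdSqrt W * τ).trace := by rw [trace_mul_cycle]
    _ = (W * τ).trace := by rw [psdSqrt_mul_self hW]

lemma rootFidelity_le_measurement {I : Type*} [Fintype I]
    (ρ σ : Matrix (Fin n) (Fin n) ℂ) (hρ : ρ.PosSemidef) (hσ : σ.PosSemidef)
    (W : I → Matrix (Fin n) (Fin n) ℂ) (hW : ∀ i, (W i).PosSemidef)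
    (hWsum : ∑ i, W i = 1) :
    rootFidelity ρ σ ≤
      ∑ i, Real.sqrt ((W i * ρ).trace.re) * Real.sqrt ((W i * σ).trace.re) := by
  classical
  set R := psdSqrt ρ with hRdef
  set G := psdSqrt σ with hGdef
  have hR := psdSqrt_posSemidef hρ
  have hG := psdSqrt_posSemidef hσ
  have hS : (R * σ * R).PosSemidef := by
    have := hσ.mul_mul_conjTranspose_same R
    rwa [hR.1.eq] at this
  set S := R * σ * R with hSdef
  have hrf : rootFidelity ρ σ = (hS.sqrt).trace.re := by
    unfold rootFidelity
    rw [← hRdef, ← hSdef, psdSqrt_eq hS]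
  set μ : Fin n → ℝ := hS.1.eigenvalues with hμdef
  have hμ : ∀ j, 0 ≤ μ j := hS.eigenvalues_nonneg
  have htr : (hS.sqrt).trace.re = ∑ j, Real.sqrt (μ j) := by
    have h1 : (star hS.1.eigenvectorUnitary.1 : Matrix (Fin n) (Fin n) ℂ) *
        hS.1.eigenvectorUnitary.1 = 1 := by
      exact_mod_cast Unitary.coe_star_mul_self hS.1.eigenvectorUnitary
    have h2 : (hS.sqrt).trace = ∑ j, (Real.sqrt (μ j) : ℂ) := by
      unfold Matrix.PosSemidef.sqrt
      rw [trace_mul_cycle, h1, one_mul, trace_diagonal]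
      rfl
    rw [h2, Complex.re_sum]
    exact Finset.sum_congr rfl fun j _ => by simp
  set v : Fin n → (Fin n → ℂ) := fun j => (WithLp.equiv 2 _) (hS.1.eigenvectorBasis j) with hvdef
  have hvE : ∀ j, toE (v j) = hS.1.eigenvectorBasis j := fun j =>
    (WithLp.equiv 2 _).symm_apply_apply _
  have hv : ∀ j k, star (v j) ⬝ᵥ v k = if j = k then (1 : ℂ) else 0 := by
    intro j k
    rw [← inner_toE, hvE, hvE]
    exact orthonormal_iff_ite.mp hS.1.eigenvectorBasis.orthonormal j k
  set w : Fin n → (Fin n → ℂ) := fun j => (G * R) *ᵥ v j with hwdef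
  have hGR : (G * R)ᴴ * (G * R) = S := by
    rw [conjTranspose_mul, hR.1.eq, hG.1.eq]
    calc R * G * (G * R) = R * (G * G) * R := by simp only [mul_assoc]
      _ = S := by rw [psdSqrt_mul_self hσ]
  have hww : ∀ j k, star (w j) ⬝ᵥ w k = (μ k : ℂ) * (star (v j) ⬝ᵥ v k) := by
    intro j k
    calc star (w j) ⬝ᵥ w k = star (v j) ⬝ᵥ (((G * R)ᴴ * (G * R)) *ᵥ v k) := by
          rw [dot_shift]
      _ = star (v j) ⬝ᵥ (S *ᵥ v k) := by rw [hGR]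
      _ = (μ k : ℂ) * (star (v j) ⬝ᵥ v k) := by
          rw [show S *ᵥ v k = μ k • v k from hS.1.mulVec_eigenvectorBasis k,
            RCLike.real_smul_eq_coe_smul (K := ℂ), dotProduct_smul, smul_eq_mul]
          norm_cast

  have hw_self : ∀ j, star (w j) ⬝ᵥ w j = (μ j : ℂ) := by
    intro j; rw [hww, hv]; simp
  have hw0 : ∀ j, μ j = 0 → w j = 0 := by
    intro j h
    exact dotProduct_star_self_eq_zero.mp (by rw [hw_self j, h, Complex.ofReal_zero])
  set u : Fin n → (Fin n → ℂ) := fun j => ((Real.sqrt (μ j))⁻¹ : ℂ) • w j with hudef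
  have hu0 : ∀ j, μ j = 0 → u j = 0 := by
    intro j h; rw [hudef]; simp [hw0 j h]
  have huw : ∀ j, star (u j) ⬝ᵥ w j = (Real.sqrt (μ j) : ℂ) := by
    intro j
    by_cases h : μ j = 0
    · simp [hudef, hw0 j h, h]
    · have hs : Real.sqrt (μ j) ≠ 0 := Real.sqrt_ne_zero'.mpr ((hμ j).lt_of_ne (Ne.symm h))
      rw [hudef]
      simp only [star_smul, smul_dotProduct, hw_self j, star_inv₀, RCLike.star_def,
        Complex.conj_ofReal, smul_eq_mul]
      rw [← Complex.ofReal_inv, ← Complex.ofReal_mul]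
      congr 1
      field_simp
      exact (Real.sq_sqrt (hμ j)).symm
  have huu : ∀ j k, μ j ≠ 0 → μ k ≠ 0 →
      star (u j) ⬝ᵥ u k = if j = k then (1 : ℂ) else 0 := by
    intro j k hj hk
    rw [hudef]
    simp only [star_smul, smul_dotProduct, dotProduct_smul, star_inv₀, RCLike.star_def,
      Complex.conj_ofReal, smul_eq_mul, hww j k, hv j k]
    by_cases h2 : j = k
    · subst h2
      simp only [if_pos]
      have hs : Real.sqrt (μ j) ≠ 0 := Real.sqrt_ne_zero'.mpr ((hμ j).lt_of_ne (Ne.symm hj))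
      have hμs : (μ j : ℂ) = (Real.sqrt (μ j) : ℂ) * (Real.sqrt (μ j) : ℂ) := by
        rw [← Complex.ofReal_mul, Real.mul_self_sqrt (hμ j)]
      rw [mul_one, hμs]
      have hsC : (Real.sqrt (μ j) : ℂ) ≠ 0 := by exact_mod_cast hs
      field_simp
    · simp [h2]
  -- split over the POVM
  set Q : I → Matrix (Fin n) (Fin n) ℂ := fun i => psdSqrt (W i) with hQdef
  have hQpsd : ∀ i, (Q i).PosSemidef := fun i => psdSqrt_posSemidef (hW i)
  have hsplitM : G * R = ∑ i, (Q i * G)ᴴ * (Q i * R) := by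
    have h1 : G * R = G * (1 : Matrix (Fin n) (Fin n) ℂ) * R := by rw [mul_one]
    rw [h1, ← hWsum, Finset.mul_sum, Finset.sum_mul]
    refine Finset.sum_congr rfl fun i _ => ?_
    rw [conjTranspose_mul, (hQpsd i).1.eq, hG.1.eq, ← psdSqrt_mul_self (hW i)]
    simp only [mul_assoc, hQdef, hGdef]
  have key : ∀ j, (star (u j) ⬝ᵥ w j).re =
      ∑ i, (star ((Q i * G) *ᵥ u j) ⬝ᵥ ((Q i * R) *ᵥ v j)).re := by
    intro j
    have hw' : w j = ∑ i, ((Q i * G)ᴴ * (Q i * R)) *ᵥ v j := by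
      rw [hwdef]
      simp only
      rw [hsplitM, my_sum_mulVec]
    rw [hw', my_dotProduct_sum, Complex.re_sum]
    exact Finset.sum_congr rfl fun i _ => by rw [dot_shift]
  have hbessel_v : ∀ i, ∑ j, ‖toE ((Q i * R) *ᵥ v j)‖ ^ 2 ≤ (W i * ρ).trace.re := by
    intro i
    have horth : Orthonormal ℂ (fun j : (Finset.univ : Finset (Fin n)) => toE (v j)) := by
      rw [orthonormal_iff_ite]
      rintro ⟨j, _⟩ ⟨k, _⟩
      rw [inner_toE, hv]
      simp [Subtype.ext_iff]
    have hb := bessel_sum (Q i * R) Finset.univ v horth (fun j hj => absurd (Finset.mem_univ j) hj)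
    refine hb.trans (le_of_eq ?_)
    rw [show ((Q i * R) * (Q i * R)ᴴ).trace = (W i * ρ).trace from
      conj_mul_trace_eq (W i) ρ (hW i) hρ]
  have hbessel_u : ∀ i, ∑ j, ‖toE ((Q i * G) *ᵥ u j)‖ ^ 2 ≤ (W i * σ).trace.re := by
    intro i
    set s := Finset.univ.filter (fun j => μ j ≠ 0) with hsdef
    have hmem : ∀ j, j ∈ s ↔ μ j ≠ 0 := by
      intro j; rw [hsdef, Finset.mem_filter]; simp
    have horth : Orthonormal ℂ (fun j : s => toE (u j)) := by
      rw [orthonormal_iff_ite]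
      rintro ⟨j, hj⟩ ⟨k, hk⟩
      rw [inner_toE, huu j k ((hmem j).mp hj) ((hmem k).mp hk)]
      simp [Subtype.ext_iff]
    have hzero : ∀ j ∉ s, u j = 0 := by
      intro j hj
      rw [hmem j, not_not] at hj
      exact hu0 j hj
    have hb := bessel_sum (Q i * G) s u horth hzero
    refine hb.trans (le_of_eq ?_)
    rw [show ((Q i * G) * (Q i * G)ᴴ).trace = (W i * σ).trace from
      conj_mul_trace_eq (W i) σ (hW i) hσ]
  rw [hrf, htr]
  calc ∑ j, Real.sqrt (μ j) = ∑ j, (star (u j) ⬝ᵥ w j).re := by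
        exact Finset.sum_congr rfl fun j _ => by rw [huw j, Complex.ofReal_re]
    _ = ∑ j, ∑ i, (star ((Q i * G) *ᵥ u j) ⬝ᵥ ((Q i * R) *ᵥ v j)).re :=
        Finset.sum_congr rfl fun j _ => key j
    _ = ∑ i, ∑ j, (star ((Q i * G) *ᵥ u j) ⬝ᵥ ((Q i * R) *ᵥ v j)).re := Finset.sum_comm
    _ ≤ ∑ i, ∑ j, ‖toE ((Q i * G) *ᵥ u j)‖ * ‖toE ((Q i * R) *ᵥ v j)‖ := by
        refine Finset.sum_le_sum fun i _ => Finset.sum_le_sum fun j _ => ?_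
        have h := re_inner_le_norm (𝕜 := ℂ) (toE ((Q i * G) *ᵥ u j)) (toE ((Q i * R) *ᵥ v j))
        rw [inner_toE] at h
        simpa [RCLike.re_to_complex] using h
    _ ≤ ∑ i, Real.sqrt (∑ j, ‖toE ((Q i * G) *ᵥ u j)‖ ^ 2) *
          Real.sqrt (∑ j, ‖toE ((Q i * R) *ᵥ v j)‖ ^ 2) := by
        refine Finset.sum_le_sum fun i _ => ?_
        exact Real.sum_mul_le_sqrt_mul_sqrt Finset.univ _ _
    _ ≤ ∑ i, Real.sqrt ((W i * σ).trace.re) * Real.sqrt ((W i * ρ).trace.re) := by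
        refine Finset.sum_le_sum fun i _ => ?_
        exact mul_le_mul (Real.sqrt_le_sqrt (hbessel_u i)) (Real.sqrt_le_sqrt (hbessel_v i))
          (Real.sqrt_nonneg _) (Real.sqrt_nonneg _)
    _ = ∑ i, Real.sqrt ((W i * ρ).trace.re) * Real.sqrt ((W i * σ).trace.re) :=
        Finset.sum_congr rfl fun i _ => mul_comm _ _

end main

section numeric

lemma cs2 {u1 u2 v1 v2 : ℝ} (h1 : 0 ≤ u1) (h2 : 0 ≤ u2) (h3 : 0 ≤ v1) (h4 : 0 ≤ v2) :
    Real.sqrt u1 * Real.sqrt v1 + Real.sqrt u2 * Real.sqrt v2 ≤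
      Real.sqrt (u1 + u2) * Real.sqrt (v1 + v2) := by
  have h := Real.sum_sqrt_mul_sqrt_le (Finset.univ : Finset (Fin 2))
    (f := ![u1, u2]) (g := ![v1, v2]) (fun i => by fin_cases i <;> assumption)
    (fun i => by fin_cases i <;> assumption)
  simpa [Fin.sum_univ_two] using h

lemma numeric_lemma (α β α' β' r : ℝ)
    (hα : 0 < α) (hβ : 0 ≤ β) (hβα : β ≤ α) (hα' : 0 ≤ α') (hα'β' : α' < β')
    (hab : α ^ 2 + β ^ 2 ≤ 1) (hab' : α' ^ 2 + β' ^ 2 ≤ 1) (hr0 : 0 ≤ r)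
    (hr : r ≤ α * α' + β * β' +
      Real.sqrt (1 - α ^ 2 - β ^ 2) * Real.sqrt (1 - α' ^ 2 - β' ^ 2)) :
    r ^ 2 < 1 - (1 / 2) * (α - β) ^ 2 := by
  have hβ' : 0 ≤ β' := hα'.trans hα'β'.le
  set x := Real.sqrt (1 - α ^ 2 - β ^ 2) with hxdef
  set y := Real.sqrt (1 - α' ^ 2 - β' ^ 2) with hydef
  have hx0 : 0 ≤ x := Real.sqrt_nonneg _
  have hy0 : 0 ≤ y := Real.sqrt_nonneg _
  have hx2 : x ^ 2 = 1 - α ^ 2 - β ^ 2 := Real.sq_sqrt (by linarith)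
  have hy2 : y ^ 2 = 1 - α' ^ 2 - β' ^ 2 := Real.sq_sqrt (by linarith)
  set m := Real.sqrt ((α' ^ 2 + β' ^ 2) / 2) with hmdef
  have hm0 : 0 ≤ m := Real.sqrt_nonneg _
  have hm2 : m ^ 2 = (α' ^ 2 + β' ^ 2) / 2 := Real.sq_sqrt (by positivity)
  have step1 : α * α' + β * β' < m * (α + β) := by
    have hsq : (α * α' + β * β') ^ 2 < (m * (α + β)) ^ 2 := by
      have hkey : (m * (α + β)) ^ 2 - (α * α' + β * β') ^ 2 =
          ((α ^ 2 - β ^ 2) * (β' ^ 2 - α' ^ 2) + 2 * (α * β) * (α' - β') ^ 2) / 2 := by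
        rw [mul_pow, hm2]; ring
      have hd : 0 < β' ^ 2 - α' ^ 2 := by
        have := mul_pos (show (0:ℝ) < β' - α' by linarith) (show (0:ℝ) < β' + α' by linarith)
        nlinarith [this]
      have hpos : 0 < (α ^ 2 - β ^ 2) * (β' ^ 2 - α' ^ 2) + 2 * (α * β) * (α' - β') ^ 2 := by
        rcases eq_or_lt_of_le hβ with hb0 | hbpos
        · have hα2 : 0 < α ^ 2 - β ^ 2 := by rw [← hb0]; simpa using pow_pos hα 2
          have t2 : (0:ℝ) ≤ 2 * (α * β) * (α' - β') ^ 2 := by positivity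
          have := mul_pos hα2 hd
          linarith
        · have t1 : 0 < 2 * (α * β) * (α' - β') ^ 2 :=
            mul_pos (by positivity) (sq_pos_of_ne_zero (sub_ne_zero.mpr hα'β'.ne))
          have t2 : (0:ℝ) ≤ (α ^ 2 - β ^ 2) * (β' ^ 2 - α' ^ 2) :=
            mul_nonneg (by nlinarith) hd.le
          linarith
      linarith [hkey, hpos]
    exact lt_of_pow_lt_pow_left₀ 2 (by positivity) hsq
  have hYeq : m * (α + β) =
      Real.sqrt ((α + β) ^ 2 / 2) * Real.sqrt (α' ^ 2 + β' ^ 2) := by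
    have e1 : m * (α + β) = Real.sqrt ((α' ^ 2 + β' ^ 2) / 2 * (α + β) ^ 2) := by
      rw [Real.sqrt_mul (by positivity), Real.sqrt_sq (by positivity), hmdef]
    have e2 : (α' ^ 2 + β' ^ 2) / 2 * (α + β) ^ 2 = (α + β) ^ 2 / 2 * (α' ^ 2 + β' ^ 2) := by
      ring
    rw [e1, e2, Real.sqrt_mul (by positivity)]
  have step2 : m * (α + β) + x * y ≤ Real.sqrt (1 - (1 / 2) * (α - β) ^ 2) := by
    have hxy : x * y = Real.sqrt (x ^ 2) * Real.sqrt (y ^ 2) := by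
      rw [Real.sqrt_sq hx0, Real.sqrt_sq hy0]
    rw [hYeq, hxy]
    have h := cs2 (u1 := (α + β) ^ 2 / 2) (u2 := x ^ 2) (v1 := α' ^ 2 + β' ^ 2) (v2 := y ^ 2)
      (by positivity) (by positivity) (by positivity) (by positivity)
    refine h.trans (le_of_eq ?_)
    have hv : α' ^ 2 + β' ^ 2 + y ^ 2 = 1 := by rw [hy2]; ring
    have hu : (α + β) ^ 2 / 2 + x ^ 2 = 1 - (1 / 2) * (α - β) ^ 2 := by rw [hx2]; ring
    rw [hv, hu, Real.sqrt_one, mul_one]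
  have hlt : r < Real.sqrt (1 - (1 / 2) * (α - β) ^ 2) := by
    calc r ≤ α * α' + β * β' + x * y := hr
      _ < m * (α + β) + x * y := by linarith
      _ ≤ _ := step2
  have hnn : 0 ≤ 1 - (1 / 2) * (α - β) ^ 2 := by
    have h1 : (α - β) ^ 2 ≤ α ^ 2 := pow_le_pow_left₀ (by linarith) (by linarith) 2
    have h2 : (0:ℝ) ≤ β ^ 2 := sq_nonneg β
    linarith
  calc r ^ 2 < (Real.sqrt (1 - (1 / 2) * (α - β) ^ 2)) ^ 2 := by
        exact pow_lt_pow_left₀ hlt hr0 (by norm_num)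
    _ = 1 - (1 / 2) * (α - β) ^ 2 := Real.sq_sqrt hnn

end numeric

lemma psdSqrt_posSemidef' {n : ℕ} (A : Matrix (Fin n) (Fin n) ℂ) :
    (psdSqrt A).PosSemidef := by
  by_cases h : A.PosSemidef
  · rw [psdSqrt_eq h]; exact h.posSemidef_sqrt
  · unfold psdSqrt; rw [dif_neg h]; exact Matrix.PosSemidef.zero

lemma rootFidelity_nonneg {n : ℕ} (ρ σ : Matrix (Fin n) (Fin n) ℂ) :
    0 ≤ rootFidelity ρ σ := by
  unfold rootFidelity
  exact (Complex.le_def.mp (trace_psd_nonneg (psdSqrt_posSemidef' _))).1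


/-- **Robustness lower bound from the measurement distribution.**
If the fidelity distance from ρ to σ is at most
`min_{c ≠ c*} (1/2)(√p_{c*} − √p_c)²`, then the classifier's prediction does not change:
the outcome probability of c* on E(σ) dominates that of every other class. -/
theorem robustness_lower_bound_channel
    {N : ℕ} {C K : Type*} [Fintype C] [DecidableEq C] [Fintype K]
    (hC : 1 < Fintype.card C)
    (M : C → Matrix (Fin N) (Fin N) ℂ) (hM : IsPOVM M)
    (E : K → Matrix (Fin N) (Fin N) ℂ) (hE : IsKrausFamily E)
    (ρ : Matrix (Fin N) (Fin N) ℂ) (hρ : IsDensityMatrix ρ)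
    (p : C → ℝ) (hp : ∀ c, (p c : ℂ) = (M c * channel E ρ).trace)
    (cstar : C) (hcstar : ∀ c, p c ≤ p cstar)
    (σ : Matrix (Fin N) (Fin N) ℂ) (hσ : IsDensityMatrix σ)
    (hclose : 1 - fidelity ρ σ ≤
      minErase cstar hC fun c => (1 / 2) * (Real.sqrt (p cstar) - Real.sqrt (p c)) ^ 2) :
    ∀ c, c ≠ cstar →
      (M c * channel E σ).trace ≤ (M cstar * channel E σ).trace := by

  classical
  obtain ⟨hMpsd, hMsum⟩ := hM
  obtain ⟨hρpsd, hρtr⟩ := hρ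
  obtain ⟨hσpsd, hσtr⟩ := hσ
  intro c hcc
  set Nv : C → Matrix (Fin N) (Fin N) ℂ := fun c => ∑ k, (E k)ᴴ * M c * E k with hNvdef
  have hNvpsd : ∀ c, (Nv c).PosSemidef := by
    intro c
    exact Finset.sum_induction _ _ (fun a b ha hb => ha.add hb) Matrix.PosSemidef.zero
      (fun k _ => (hMpsd c).conjTranspose_mul_mul_same (E k))
  have hNvsum : ∑ c, Nv c = 1 := by
    rw [hNvdef, Finset.sum_comm]
    calc ∑ k, ∑ c, (E k)ᴴ * M c * E k = ∑ k : K, (E k)ᴴ * E k := by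
          refine Finset.sum_congr rfl fun k _ => ?_
          rw [← Finset.sum_mul, ← Finset.mul_sum, hMsum, mul_one]
      _ = 1 := hE
  have htrace : ∀ (c : C) (τ : Matrix (Fin N) (Fin N) ℂ),
      (M c * channel E τ).trace = (Nv c * τ).trace := by
    intro c τ
    unfold channel
    rw [Finset.mul_sum, trace_sum, hNvdef]
    simp only
    rw [Finset.sum_mul, trace_sum]
    refine Finset.sum_congr rfl fun k _ => ?_
    calc (M c * (E k * τ * (E k)ᴴ)).trace = ((M c * E k * τ) * (E k)ᴴ).trace := by
          rw [← mul_assoc, ← mul_assoc]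
      _ = ((E k)ᴴ * (M c * E k * τ)).trace := trace_mul_comm _ _
      _ = ((E k)ᴴ * M c * E k * τ).trace := by rw [← mul_assoc, ← mul_assoc]
  set q : C → ℝ := fun c => (Nv c * σ).trace.re with hqdef
  have hqC : ∀ c, (Nv c * σ).trace = (q c : ℂ) :=
    fun c => (trace_psd_mul_eq_re (hNvpsd c) hσpsd).symm
  have hp' : ∀ c, p c = (Nv c * ρ).trace.re := by
    intro c
    have h1 := hp c
    rw [htrace c ρ, ← trace_psd_mul_eq_re (hNvpsd c) hρpsd] at h1
    exact_mod_cast h1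
  have hppos : ∀ c, 0 ≤ p c := fun c =>
    (hp' c).symm ▸ trace_psd_mul_re_nonneg (hNvpsd c) hρpsd
  have hqpos : ∀ c, 0 ≤ q c := fun c => trace_psd_mul_re_nonneg (hNvpsd c) hσpsd
  have hpsum : ∑ c', p c' = 1 := by
    have h2 : ((∑ c', p c' : ℝ) : ℂ) = 1 := by
      rw [Complex.ofReal_sum, Finset.sum_congr rfl fun c' _ => hp c',
        Finset.sum_congr rfl fun c' _ => htrace c' ρ,
        ← trace_sum, ← Finset.sum_mul, hNvsum, one_mul, hρtr]
    exact_mod_cast h2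
  have hqsum : ∑ c', q c' = 1 := by
    have h2 : ((∑ c', q c' : ℝ) : ℂ) = 1 := by
      rw [Complex.ofReal_sum, Finset.sum_congr rfl fun c' _ => (hqC c').symm,
        ← trace_sum, ← Finset.sum_mul, hNvsum, one_mul, hσtr]
    exact_mod_cast h2
  rw [htrace c σ, htrace cstar σ, hqC c, hqC cstar, Complex.real_le_real]
  by_contra hlt
  push_neg at hlt
  -- measurement bound
  have hbound : rootFidelity ρ σ ≤ ∑ i, Real.sqrt (p i) * Real.sqrt (q i) := by
    refine (rootFidelity_le_measurement ρ σ hρpsd hσpsd Nv hNvpsd hNvsum).trans_eq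
      (Finset.sum_congr rfl fun i _ => ?_)
    rw [← hp' i]
  set t : Finset C := (Finset.univ.erase cstar).erase c with htdef
  have hmemc : c ∈ Finset.univ.erase cstar := Finset.mem_erase.mpr ⟨hcc, Finset.mem_univ c⟩
  have hsplit : ∑ i, Real.sqrt (p i) * Real.sqrt (q i) =
      Real.sqrt (p cstar) * Real.sqrt (q cstar) + Real.sqrt (p c) * Real.sqrt (q c) +
        ∑ i ∈ t, Real.sqrt (p i) * Real.sqrt (q i) := by
    rw [← Finset.add_sum_erase _ _ (Finset.mem_univ cstar), ← Finset.add_sum_erase _ _ hmemc,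
      htdef]
    ring
  have hrestp : ∑ i ∈ t, p i = 1 - p cstar - p c := by
    rw [htdef, Finset.sum_erase_eq_sub hmemc, Finset.sum_erase_eq_sub (Finset.mem_univ cstar),
      hpsum]
  have hrestq : ∑ i ∈ t, q i = 1 - q cstar - q c := by
    rw [htdef, Finset.sum_erase_eq_sub hmemc, Finset.sum_erase_eq_sub (Finset.mem_univ cstar),
      hqsum]
  have htail : ∑ i ∈ t, Real.sqrt (p i) * Real.sqrt (q i) ≤
      Real.sqrt (1 - p cstar - p c) * Real.sqrt (1 - q cstar - q c) := by
    have h := Real.sum_sqrt_mul_sqrt_le t hppos hqpos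
    rwa [hrestp, hrestq] at h
  have hapos : 0 < p cstar := by
    by_contra h
    push_neg at h
    have : ∑ c', p c' ≤ 0 := Finset.sum_nonpos fun c' _ => (hcstar c').trans h
    linarith
  have hab1 : p cstar + p c ≤ 1 := by
    have h1 : 0 ≤ ∑ i ∈ t, p i := Finset.sum_nonneg fun i _ => hppos i
    linarith [hrestp]
  have hab1' : q cstar + q c ≤ 1 := by
    have h1 : 0 ≤ ∑ i ∈ t, q i := Finset.sum_nonneg fun i _ => hqpos i
    linarith [hrestq]
  have hnum := numeric_lemma (Real.sqrt (p cstar)) (Real.sqrt (p c))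
      (Real.sqrt (q cstar)) (Real.sqrt (q c)) (rootFidelity ρ σ)
      (Real.sqrt_pos.mpr hapos) (Real.sqrt_nonneg _)
      (Real.sqrt_le_sqrt (hcstar c)) (Real.sqrt_nonneg _)
      (Real.sqrt_lt_sqrt (hqpos cstar) hlt)
      (by rw [Real.sq_sqrt (hppos cstar), Real.sq_sqrt (hppos c)]; exact hab1)
      (by rw [Real.sq_sqrt (hqpos cstar), Real.sq_sqrt (hqpos c)]; exact hab1')
      (rootFidelity_nonneg ρ σ)
      (by
        rw [Real.sq_sqrt (hppos cstar), Real.sq_sqrt (hppos c),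
          Real.sq_sqrt (hqpos cstar), Real.sq_sqrt (hqpos c)]
        calc rootFidelity ρ σ ≤ ∑ i, Real.sqrt (p i) * Real.sqrt (q i) := hbound
          _ = _ + _ + ∑ i ∈ t, Real.sqrt (p i) * Real.sqrt (q i) := hsplit
          _ ≤ _ := by
              have := htail
              linarith)
  have hmin : minErase cstar hC (fun c => (1 / 2) * (Real.sqrt (p cstar)
      - Real.sqrt (p c)) ^ 2) ≤ (1 / 2) * (Real.sqrt (p cstar) - Real.sqrt (p c)) ^ 2 := by
    unfold minErase
    exact Finset.inf'_le _ hmemc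
  have hF : fidelity ρ σ = (rootFidelity ρ σ) ^ 2 := rfl
  have hcl := hclose.trans hmin
  rw [hF] at hcl
  linarith
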